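/- The sequence p ↦ (3/(p−3))·((1/2) csc(π/(2p)) − 1) is strictly increasing for integers p ≥ 4. -/

import Mathlib

open Real


lemma my_sin_ge (x : ℝ) (hx : 0 ≤ x) : x - x ^ 3 / 6 ≤ Real.sin x := by
  have hd : ∀ t : ℝ, HasDerivAt (fun s : ℝ => Real.sin s - s + s ^ 3 / 6)
      (Real.cos t - 1 + t ^ 2 / 2) t := by
    intro t
    have h := ((Real.hasDerivAt_sin t).sub (hasDerivAt_id t)).add
      ((hasDerivAt_pow 3 t).div_const 6)
    refine h.congr_deriv ?_
    simp
    ring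
  have mono : MonotoneOn (fun s : ℝ => Real.sin s - s + s ^ 3 / 6) (Set.Ici 0) := by
    apply monotoneOn_of_deriv_nonneg (convex_Ici 0)
    · exact fun t _ => (hd t).continuousAt.continuousWithinAt
    · exact fun t _ => (hd t).differentiableAt.differentiableWithinAt
    · intro t _
      rw [(hd t).deriv]
      nlinarith [Real.one_sub_sq_div_two_le_cos (x := t)]
  have h0 := mono Set.self_mem_Ici (Set.mem_Ici.2 hx) hx
  simp at h0
  linarith

lemma my_cos_le (x : ℝ) (hx : 0 ≤ x) : Real.cos x ≤ 1 - x ^ 2 / 2 + x ^ 4 / 24 := by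
  have hd : ∀ t : ℝ, HasDerivAt (fun s : ℝ => 1 - s ^ 2 / 2 + s ^ 4 / 24 - Real.cos s)
      (-t + t ^ 3 / 6 + Real.sin t) t := by
    intro t
    have h := ((((hasDerivAt_pow 2 t).div_const 2).const_sub 1).add
      ((hasDerivAt_pow 4 t).div_const 24)).sub (Real.hasDerivAt_cos t)
    refine h.congr_deriv ?_
    simp
    ring
  have mono : MonotoneOn (fun s : ℝ => 1 - s ^ 2 / 2 + s ^ 4 / 24 - Real.cos s) (Set.Ici 0) := by
    apply monotoneOn_of_deriv_nonneg (convex_Ici 0)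
    · exact fun t _ => (hd t).continuousAt.continuousWithinAt
    · exact fun t _ => (hd t).differentiableAt.differentiableWithinAt
    · intro t ht
      rw [(hd t).deriv]
      rw [interior_Ici] at ht
      have := my_sin_ge t (le_of_lt ht)
      linarith
  have h0 := mono Set.self_mem_Ici (Set.mem_Ici.2 hx) hx
  simp at h0
  linarith

lemma my_sin_le (x : ℝ) (hx : 0 ≤ x) : Real.sin x ≤ x - x ^ 3 / 6 + x ^ 5 / 120 := by
  have hd : ∀ t : ℝ, HasDerivAt (fun s : ℝ => s - s ^ 3 / 6 + s ^ 5 / 120 - Real.sin s)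
      (1 - t ^ 2 / 2 + t ^ 4 / 24 - Real.cos t) t := by
    intro t
    have h := (((hasDerivAt_id t).sub ((hasDerivAt_pow 3 t).div_const 6)).add
      ((hasDerivAt_pow 5 t).div_const 120)).sub (Real.hasDerivAt_sin t)
    refine h.congr_deriv ?_
    simp
    ring
  have mono : MonotoneOn (fun s : ℝ => s - s ^ 3 / 6 + s ^ 5 / 120 - Real.sin s) (Set.Ici 0) := by
    apply monotoneOn_of_deriv_nonneg (convex_Ici 0)
    · exact fun t _ => (hd t).continuousAt.continuousWithinAt
    · exact fun t _ => (hd t).differentiableAt.differentiableWithinAt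
    · intro t ht
      rw [(hd t).deriv]
      rw [interior_Ici] at ht
      have := my_cos_le t (le_of_lt ht)
      linarith
  have h0 := mono Set.self_mem_Ici (Set.mem_Ici.2 hx) hx
  simp at h0
  linarith


lemma my_sin_pos (x : ℝ) (hx : 0 < x) (hx1 : x ≤ 1) : 0 < Real.sin x := by
  have h := my_sin_ge x hx.le
  have h3 : x ^ 3 ≤ x := by nlinarith [mul_pos hx hx]
  linarith

lemma my_csc_ub (x : ℝ) (hx : 0 < x) (hx1 : x ≤ 1 / 2) :
    (Real.sin x)⁻¹ ≤ 1 / x + x / 6 + 3 / 100 * x ^ 3 := by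
  have hs := my_sin_pos x hx (by linarith)
  have hg := my_sin_ge x hx.le
  rw [inv_eq_one_div, div_le_iff₀ hs]
  have key : (1 / x + x / 6 + 3 / 100 * x ^ 3) * (x - x ^ 3 / 6) = 1 + x ^ 4 / 450 - x ^ 6 / 200 := by
    field_simp
    ring
  have h2 : 1 ≤ (1 / x + x / 6 + 3 / 100 * x ^ 3) * (x - x ^ 3 / 6) := by
    rw [key]
    have hx4 : (0:ℝ) ≤ x ^ 4 := by positivity
    have hsq : x ^ 2 ≤ 1 / 4 := by nlinarith
    nlinarith [mul_le_mul_of_nonneg_left hsq hx4]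
  have hpos : 0 ≤ 1 / x + x / 6 + 3 / 100 * x ^ 3 := by positivity
  nlinarith [mul_le_mul_of_nonneg_left hg hpos]

lemma my_csc_lb (x : ℝ) (hx : 0 < x) (hx1 : x ≤ 1) :
    1 / x + x / 6 ≤ (Real.sin x)⁻¹ := by
  have hs := my_sin_pos x hx hx1
  have hl := my_sin_le x hx.le
  rw [inv_eq_one_div, le_div_iff₀ hs]
  have key : (1 / x + x / 6) * (x - x ^ 3 / 6 + x ^ 5 / 120) =
      1 - 7 * x ^ 4 / 360 + x ^ 6 / 720 := by
    field_simp
    ring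
  have hpos : 0 ≤ 1 / x + x / 6 := by positivity
  have h1 : (1 / x + x / 6) * Real.sin x ≤ 1 - 7 * x ^ 4 / 360 + x ^ 6 / 720 := by
    rw [← key]
    exact mul_le_mul_of_nonneg_left hl hpos
  have h2 : x ^ 6 ≤ x ^ 4 := pow_le_pow_of_le_one hx.le hx1 (by norm_num)
  have hx4 : (0:ℝ) ≤ x ^ 4 := by positivity
  linarith

lemma my_core (P : ℝ) (hP : 4 ≤ P) :
    (P - 2) * (1 / (π / (2 * P)) + (π / (2 * P)) / 6 + 3 / 100 * (π / (2 * P)) ^ 3)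
      - (P - 3) * (1 / (π / (2 * (P + 1))) + (π / (2 * (P + 1))) / 6) < 2 := by
  have hπ := Real.pi_gt_d6
  have hπ' := Real.pi_lt_d6
  have hπ0 : (0:ℝ) < π := by linarith
  have hP0 : (0:ℝ) < P := by linarith
  have hP1 : (0:ℝ) < P + 1 := by linarith
  have heq : (P - 2) * (1 / (π / (2 * P)) + (π / (2 * P)) / 6 + 3 / 100 * (π / (2 * P)) ^ 3)
      - (P - 3) * (1 / (π / (2 * (P + 1))) + (π / (2 * (P + 1))) / 6)
      = 6 / π + π / 12 * ((2 * P - 2) / (P * (P + 1))) + 3 * π ^ 3 / 800 * ((P - 2) / P ^ 3) := by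
    field_simp
    ring
  rw [heq]
  have e1 : (2 * P - 2) / (P * (P + 1)) ≤ 3 / 10 := by
    rw [div_le_div_iff₀ (by positivity) (by norm_num)]
    nlinarith [mul_nonneg (sub_nonneg.2 hP) (show (0:ℝ) ≤ 3 * P - 5 by linarith)]
  have e2 : (P - 2) / P ^ 3 ≤ 1 / 32 := by
    rw [div_le_div_iff₀ (by positivity) (by norm_num)]
    nlinarith [mul_nonneg (sub_nonneg.2 hP) (show (0:ℝ) ≤ P ^ 2 + 4 * P - 16 by nlinarith)]
  have e1' : π / 12 * ((2 * P - 2) / (P * (P + 1))) ≤ π / 12 * (3 / 10) :=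
    mul_le_mul_of_nonneg_left e1 (by positivity)
  have e2' : 3 * π ^ 3 / 800 * ((P - 2) / P ^ 3) ≤ 3 * π ^ 3 / 800 * (1 / 32) :=
    mul_le_mul_of_nonneg_left e2 (by positivity)
  have h6 : 6 / π < 1.90987 := by
    rw [div_lt_iff₀ hπ0]
    nlinarith
  have hsq : π ^ 2 < 9.86961 := by nlinarith
  have h7 : π ^ 3 < 31.007 := by nlinarith [mul_lt_mul_of_pos_left hsq hπ0]
  linarith [h6, h7, e1', e2']


lemma my_step (p : ℕ) (hp : 4 ≤ p) :
    (3 / ((p : ℝ) - 3)) * ((1 / 2) * (Real.sin (π / (2 * p)))⁻¹ - 1)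
      < (3 / (((p + 1 : ℕ) : ℝ) - 3)) * ((1 / 2) * (Real.sin (π / (2 * ((p + 1 : ℕ) : ℝ))))⁻¹ - 1) := by
  have hP : (4 : ℝ) ≤ (p : ℝ) := by exact_mod_cast hp
  set P : ℝ := (p : ℝ) with hPdef
  have hcast : ((p + 1 : ℕ) : ℝ) = P + 1 := by push_cast; ring
  rw [hcast]
  have hπ := Real.pi_lt_d2
  have hπ0 : (0:ℝ) < π := Real.pi_pos
  have hx0 : 0 < π / (2 * P) := by positivity
  have hx1 : π / (2 * P) ≤ 1 / 2 := by
    rw [div_le_iff₀ (by linarith : (0:ℝ) < 2 * P)]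
    linarith
  have hy0 : 0 < π / (2 * (P + 1)) := by positivity
  have hy1 : π / (2 * (P + 1)) ≤ 1 := by
    rw [div_le_iff₀ (by linarith : (0:ℝ) < 2 * (P + 1))]
    linarith
  have hub := my_csc_ub _ hx0 hx1
  have hlb := my_csc_lb _ hy0 hy1
  have hcore := my_core P hP
  rw [div_mul_eq_mul_div 3 (P - 3), div_mul_eq_mul_div 3 (P + 1 - 3),
    div_lt_div_iff₀ (by linarith : (0:ℝ) < P - 3) (by linarith : (0:ℝ) < P + 1 - 3)]
  have h1 : (P - 2) * (Real.sin (π / (2 * P)))⁻¹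
      ≤ (P - 2) * (1 / (π / (2 * P)) + (π / (2 * P)) / 6 + 3 / 100 * (π / (2 * P)) ^ 3) :=
    mul_le_mul_of_nonneg_left hub (by linarith)
  have h2 : (P - 3) * (1 / (π / (2 * (P + 1))) + (π / (2 * (P + 1))) / 6)
      ≤ (P - 3) * (Real.sin (π / (2 * (P + 1))))⁻¹ :=
    mul_le_mul_of_nonneg_left hlb (by linarith)
  nlinarith [h1, h2, hcore]

/-- The triangle-orbifold packing density is strictly increasing in `p` for `p ≥ 4`. -/
theorem triangle_packing_density_strictMono :
    StrictMonoOn (fun p : ℕ => (3 / ((p : ℝ) - 3)) * ((1 / 2) * (Real.sin (π / (2 * p)))⁻¹ - 1))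
      (Set.Ici 4) := by
  set f : ℕ → ℝ := fun p : ℕ => (3 / ((p : ℝ) - 3)) * ((1 / 2) * (Real.sin (π / (2 * p)))⁻¹ - 1)
    with hf
  have chain : ∀ k : ℕ, ∀ a : ℕ, 4 ≤ a → f a < f (a + k + 1) := by
    intro k
    induction k with
    | zero => intro a ha; exact my_step a ha
    | succ n ih =>
      intro a ha
      have h1 := ih a ha
      have h2 := my_step (a + n + 1) (by omega)
      have : a + (n + 1) + 1 = (a + n + 1) + 1 := by omega
      rw [this]
      exact h1.trans h2
  intro a ha b hb hab
  obtain ⟨k, rfl⟩ : ∃ k, b = a + k + 1 := ⟨b - a - 1, by omega⟩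
  exact chain k a (Set.mem_Ici.1 ha)
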